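/- Let T be the d-regular rooted tree, D ≥ 1, and P ≤ Aut(T^D) a minimal pattern subgroup with group of finite type G = G_P. Then St_G(n + D − 1) ≤ RiSt_G(n) for all n ≥ 1. In particular, if G is infinite then RiSt_G(n) ≠ 1 for all n ≥ 1, i.e. G is weakly branch. -/

import Mathlib

namespace TreeFT

/-- Vertices of the `d`-regular rooted tree: finite words over `Fin d`. -/
abbrev Vertex (d : ℕ) := List (Fin d)

/-- The automorphism group of the `d`-regular rooted tree, realized as the subgroup of
permutations of the vertex set that preserve length (levels) and prefixes (adjacency). -/
def treeAut (d : ℕ) : Subgroup (Equiv.Perm (Vertex d)) where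
  carrier := {g | (∀ v : Vertex d, (g v).length = v.length) ∧
      (∀ v w : Vertex d, (g (v ++ w)).take v.length = g v)}
  one_mem' := ⟨fun _ => rfl, fun v w => List.take_left⟩
  mul_mem' := by
    rintro g h ⟨hg1, hg2⟩ ⟨hh1, hh2⟩
    refine ⟨fun v => by rw [Equiv.Perm.mul_apply, hg1, hh1], fun v w => ?_⟩
    have h1 : h (v ++ w) = h v ++ (h (v ++ w)).drop v.length := by
      conv_lhs => rw [← List.take_append_drop v.length (h (v ++ w))]
      rw [hh2]
    rw [Equiv.Perm.mul_apply, Equiv.Perm.mul_apply, h1]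
    have h2 : v.length = (h v).length := (hh1 v).symm
    rw [h2]
    exact hg2 _ _
  inv_mem' := by
    rintro g ⟨hg1, hg2⟩
    constructor
    · intro v
      have h := hg1 (g⁻¹ v)
      rw [← Equiv.Perm.mul_apply, mul_inv_cancel, Equiv.Perm.one_apply] at h
      exact h.symm
    · intro v w
      apply g.injective
      have hlen : v.length ≤ (g⁻¹ (v ++ w)).length := by
        have h := hg1 (g⁻¹ (v ++ w))
        rw [← Equiv.Perm.mul_apply, mul_inv_cancel, Equiv.Perm.one_apply] at h
        rw [← h, List.length_append]
        exact Nat.le_add_right _ _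
      have h3 := hg2 ((g⁻¹ (v ++ w)).take v.length) ((g⁻¹ (v ++ w)).drop v.length)
      rw [List.take_append_drop, ← Equiv.Perm.mul_apply, mul_inv_cancel, Equiv.Perm.one_apply, List.length_take,
        min_eq_left hlen, List.take_left] at h3
      rw [← h3, ← Equiv.Perm.mul_apply, mul_inv_cancel, Equiv.Perm.one_apply]

variable {d : ℕ}

/-- `Aut(T)` as a type. -/
abbrev TAut (d : ℕ) := ↥(treeAut d)

lemma length_apply (g : TAut d) (v : Vertex d) :
    ((g : Equiv.Perm (Vertex d)) v).length = v.length := g.2.1 v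

lemma take_apply (g : TAut d) (v w : Vertex d) :
    ((g : Equiv.Perm (Vertex d)) (v ++ w)).take v.length = (g : Equiv.Perm (Vertex d)) v :=
  g.2.2 v w

lemma apply_append (g : TAut d) (v w : Vertex d) :
    (g : Equiv.Perm (Vertex d)) (v ++ w) =
      (g : Equiv.Perm (Vertex d)) v ++ ((g : Equiv.Perm (Vertex d)) (v ++ w)).drop v.length := by
  conv_lhs => rw [← List.take_append_drop v.length ((g : Equiv.Perm (Vertex d)) (v ++ w))]
  rw [take_apply]

/-- The section `g|_v` of a tree automorphism at the vertex `v`. -/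
def sect (g : TAut d) (v : Vertex d) : TAut d :=
  ⟨{ toFun := fun w => ((g : Equiv.Perm (Vertex d)) (v ++ w)).drop v.length
     invFun := fun w =>
       (((g : Equiv.Perm (Vertex d)))⁻¹ ((g : Equiv.Perm (Vertex d)) v ++ w)).drop v.length
     left_inv := by
       intro w
       show ((g : Equiv.Perm (Vertex d))⁻¹
         ((g : Equiv.Perm (Vertex d)) v ++
           ((g : Equiv.Perm (Vertex d)) (v ++ w)).drop v.length)).drop v.length = w
       rw [← apply_append g v w, ← Equiv.Perm.mul_apply, inv_mul_cancel, Equiv.Perm.one_apply, List.drop_left]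
     right_inv := by
       intro w
       show ((g : Equiv.Perm (Vertex d))
         (v ++ ((g : Equiv.Perm (Vertex d))⁻¹
           ((g : Equiv.Perm (Vertex d)) v ++ w)).drop v.length)).drop v.length = w
       have h2 := apply_append g⁻¹ ((g : Equiv.Perm (Vertex d)) v) w
       simp only [InvMemClass.coe_inv] at h2
       rw [← Equiv.Perm.mul_apply, inv_mul_cancel, Equiv.Perm.one_apply, length_apply] at h2
       rw [← h2, ← Equiv.Perm.mul_apply, mul_inv_cancel, Equiv.Perm.one_apply, ← length_apply g v, List.drop_left] },
   by
    constructor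
    · intro w
      simp only [Equiv.coe_fn_mk, List.length_drop, length_apply, List.length_append]
      omega
    · intro w u
      simp only [Equiv.coe_fn_mk]
      rw [← List.append_assoc]
      have h0 : ((g : Equiv.Perm (Vertex d)) ((v ++ w) ++ u)).take (v ++ w).length
          = (g : Equiv.Perm (Vertex d)) (v ++ w) := take_apply g (v ++ w) u
      have h1 : w.length = (v.length + w.length) - v.length := by omega
      rw [h1, ← List.drop_take, ← List.length_append, h0]⟩

lemma sect_apply (g : TAut d) (v w : Vertex d) :
    ((sect g v : TAut d) : Equiv.Perm (Vertex d)) w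
      = ((g : Equiv.Perm (Vertex d)) (v ++ w)).drop v.length := rfl

lemma sect_mul (g h : TAut d) (v : Vertex d) :
    sect (g * h) v = sect g ((h : Equiv.Perm (Vertex d)) v) * sect h v := by
  apply Subtype.ext
  apply Equiv.ext
  intro w
  simp only [MulMemClass.coe_mul, Equiv.Perm.mul_apply, sect_apply]
  rw [← apply_append h v w, length_apply]

lemma sect_one (v : Vertex d) : sect (1 : TAut d) v = 1 := by
  apply Subtype.ext
  apply Equiv.ext
  intro w
  simp only [sect_apply, OneMemClass.coe_one, Equiv.Perm.coe_one, id_eq]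
  exact List.drop_left

end TreeFT
namespace TreeFT

variable {d : ℕ}

/-- The stabilizer `St(n)` of the `n`-th level: automorphisms acting trivially on the first
`n` levels of the tree. -/
def lst (d n : ℕ) : Subgroup (TAut d) where
  carrier := {g | ∀ v : Vertex d, v.length ≤ n → (g : Equiv.Perm (Vertex d)) v = v}
  one_mem' := fun _ _ => rfl
  mul_mem' := by
    intro g h hg hh v hv
    show (g : Equiv.Perm (Vertex d)) ((h : Equiv.Perm (Vertex d)) v) = v
    rw [hh v hv, hg v hv]
  inv_mem' := by
    intro g hg v hv
    show ((g : Equiv.Perm (Vertex d)))⁻¹ v = v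
    apply (g : Equiv.Perm (Vertex d)).injective
    rw [← Equiv.Perm.mul_apply, mul_inv_cancel, Equiv.Perm.one_apply, hg v hv]

lemma mem_lst {g : TAut d} {n : ℕ} :
    g ∈ lst d n ↔ ∀ v : Vertex d, v.length ≤ n → (g : Equiv.Perm (Vertex d)) v = v :=
  Iff.rfl

instance lst_normal (d n : ℕ) : (lst d n).Normal := by
  constructor
  intro s hs g v hv
  show (g : Equiv.Perm (Vertex d))
    ((s : Equiv.Perm (Vertex d)) (((g : Equiv.Perm (Vertex d)))⁻¹ v)) = v
  have h1 : ((g⁻¹ : TAut d) : Equiv.Perm (Vertex d)) v = ((g : Equiv.Perm (Vertex d)))⁻¹ v := by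
    simp
  have h2 : (((g : Equiv.Perm (Vertex d)))⁻¹ v).length ≤ n := by
    rw [← h1, length_apply]; exact hv
  rw [hs _ h2, ← Equiv.Perm.mul_apply, mul_inv_cancel, Equiv.Perm.one_apply]

/-- `Aut(T^n)`, the automorphism group of the finite tree consisting of the first `n` levels,
realized as the quotient of `Aut(T)` by the `n`-th level stabilizer. -/
abbrev FAut (d n : ℕ) := TAut d ⧸ lst d n

/-- `π_n : Aut(T) → Aut(T^n)`, restriction to the first `n` levels. -/
def proj (d n : ℕ) : TAut d →* FAut d n := QuotientGroup.mk' (lst d n)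

lemma proj_surjective (d n : ℕ) : Function.Surjective (proj d n) :=
  QuotientGroup.mk'_surjective _

/-- The group of finite type `G_P` of depth `D` with pattern group `P ≤ Aut(T^D)`:
all tree automorphisms whose section at every vertex acts on the first `D` levels as an
element of `P`. -/
def gft (d D : ℕ) (P : Subgroup (FAut d D)) : Subgroup (TAut d) where
  carrier := {g | ∀ v : Vertex d, proj d D (sect g v) ∈ P}
  one_mem' := by
    intro v
    rw [sect_one, map_one]
    exact one_mem P
  mul_mem' := by
    intro g h hg hh v
    rw [sect_mul, map_mul]
    exact mul_mem (hg _) (hh _)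
  inv_mem' := by
    intro g hg v
    have h2 : sect g (((g⁻¹ : TAut d) : Equiv.Perm (Vertex d)) v) * sect g⁻¹ v = 1 := by
      rw [← sect_mul, mul_inv_cancel, sect_one]
    have h3 : sect g⁻¹ v = (sect g (((g⁻¹ : TAut d) : Equiv.Perm (Vertex d)) v))⁻¹ :=
      (inv_eq_of_mul_eq_one_right h2).symm
    rw [h3, map_inv]
    exact inv_mem (hg _)

lemma mem_gft {g : TAut d} {D : ℕ} {P : Subgroup (FAut d D)} :
    g ∈ gft d D P ↔ ∀ v : Vertex d, proj d D (sect g v) ∈ P := Iff.rfl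

/-- `P ≤ Aut(T^D)` is a minimal pattern subgroup if `π_D(G_P) = P`. -/
def IsMinimalPattern (d D : ℕ) (P : Subgroup (FAut d D)) : Prop :=
  (gft d D P).map (proj d D) = P

/-- A subgroup of `Aut(T)` is level-transitive if it acts transitively on every level. -/
def LevelTransitive (H : Subgroup (TAut d)) : Prop :=
  ∀ v w : Vertex d, v.length = w.length → ∃ g ∈ H, (g : Equiv.Perm (Vertex d)) v = w

/-- A subgroup of `Aut(T)` is self-similar if it contains all sections of its elements. -/
def SelfSimilar (H : Subgroup (TAut d)) : Prop :=
  ∀ g ∈ H, ∀ v : Vertex d, sect g v ∈ H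

/-- A subgroup of `Aut(T)` is fractal if it is self-similar, level-transitive, and for every
vertex `v` the section map maps the stabilizer of `v` onto the whole group. -/
def Fractal (H : Subgroup (TAut d)) : Prop :=
  SelfSimilar H ∧ LevelTransitive H ∧
    ∀ v : Vertex d, ∀ h ∈ H, ∃ k ∈ H, (k : Equiv.Perm (Vertex d)) v = v ∧ sect k v = h

/-- The geometric product `K_n` of `K` at level `n`: elements of `St(n)` all of whose sections
at level-`n` vertices lie in `K`. -/
def geom (K : Subgroup (TAut d)) (n : ℕ) : Subgroup (TAut d) where
  carrier := {g | g ∈ lst d n ∧ ∀ v : Vertex d, v.length = n → sect g v ∈ K}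
  one_mem' := ⟨one_mem _, fun v _ => by rw [sect_one]; exact one_mem K⟩
  mul_mem' := by
    rintro g h ⟨hg1, hg2⟩ ⟨hh1, hh2⟩
    refine ⟨mul_mem hg1 hh1, fun v hv => ?_⟩
    rw [sect_mul, hh1 v hv.le]
    exact mul_mem (hg2 v hv) (hh2 v hv)
  inv_mem' := by
    rintro g ⟨hg1, hg2⟩
    refine ⟨inv_mem hg1, fun v hv => ?_⟩
    have hfix : ((g⁻¹ : TAut d) : Equiv.Perm (Vertex d)) v = v :=
      (inv_mem hg1 : g⁻¹ ∈ lst d n) v hv.le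
    have h2 : sect g v * sect g⁻¹ v = 1 := by
      have := sect_mul g g⁻¹ v
      rw [mul_inv_cancel, sect_one, hfix] at this
      exact this.symm
    rw [(inv_eq_of_mul_eq_one_right h2).symm]
    exact inv_mem (hg2 v hv)

end TreeFT
namespace TreeFT

variable {d : ℕ}

/-- The congruence topology on `Aut(T)`: the topology of pointwise convergence on the vertex
set (each vertex set carrying the discrete topology); the level stabilizers `St(n)` form a
base of neighborhoods of the identity for it. -/
instance tautTopologicalSpace (d : ℕ) : TopologicalSpace (TAut d) :=
  TopologicalSpace.induced
    (fun g : TAut d => ((g : Equiv.Perm (Vertex d)) : Vertex d → Vertex d))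
    (@Pi.topologicalSpace (Vertex d) (fun _ => Vertex d) (fun _ => ⊥))

lemma isOpen_eval (d : ℕ) (v u : Vertex d) :
    IsOpen {g : TAut d | (g : Equiv.Perm (Vertex d)) v = u} := by
  letI : TopologicalSpace (Vertex d) := ⊥
  haveI : DiscreteTopology (Vertex d) := ⟨rfl⟩
  have h : IsOpen ((fun f : Vertex d → Vertex d => f v) ⁻¹' {u}) := by
    have hc : Continuous (fun f : Vertex d → Vertex d => f v) := continuous_apply v
    exact hc.isOpen_preimage _ (isOpen_discrete _)
  exact isOpen_induced h

lemma isOpen_eval_mem (d : ℕ) (v : Vertex d) (s : Set (Vertex d)) :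
    IsOpen {g : TAut d | (g : Equiv.Perm (Vertex d)) v ∈ s} := by
  have h : {g : TAut d | (g : Equiv.Perm (Vertex d)) v ∈ s}
      = ⋃ u ∈ s, {g : TAut d | (g : Equiv.Perm (Vertex d)) v = u} := by
    ext g; simp
  rw [h]
  exact isOpen_biUnion fun u _ => isOpen_eval d v u

lemma continuous_into_vertex {X : Type*} [TopologicalSpace X] (f : X → Vertex d)
    (h : ∀ u : Vertex d, IsOpen (f ⁻¹' {u})) :
    @Continuous X (Vertex d) _ ⊥ f := by
  rw [continuous_def]
  intro s _
  have hs : f ⁻¹' s = ⋃ u ∈ s, f ⁻¹' {u} := by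
    ext x; simp
  rw [hs]
  exact isOpen_biUnion fun u _ => h u

instance tautContinuousMul (d : ℕ) : ContinuousMul (TAut d) := by
  constructor
  · -- continuity of multiplication
    apply continuous_induced_rng.2
    apply @continuous_pi _ _ _ _ (fun _ => (⊥ : TopologicalSpace (Vertex d)))
    intro v
    apply continuous_into_vertex
      (f := fun p : TAut d × TAut d => ((p.1 * p.2 : TAut d) : Equiv.Perm (Vertex d)) v)
    intro u
    have h : (fun p : TAut d × TAut d =>
          ((p.1 * p.2 : TAut d) : Equiv.Perm (Vertex d)) v) ⁻¹' {u}
        = ⋃ w : Vertex d, ({g : TAut d | (g : Equiv.Perm (Vertex d)) w = u} ×ˢ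
            {h : TAut d | (h : Equiv.Perm (Vertex d)) v = w}) := by
      ext p
      simp only [Set.mem_preimage, Set.mem_singleton_iff, Set.mem_iUnion, Set.mem_prod,
        Set.mem_setOf_eq]
      constructor
      · intro hp
        exact ⟨(p.2 : Equiv.Perm (Vertex d)) v, hp, rfl⟩
      · rintro ⟨w, hw1, hw2⟩
        show (p.1 : Equiv.Perm (Vertex d)) ((p.2 : Equiv.Perm (Vertex d)) v) = u
        rw [hw2]; exact hw1
    rw [h]
    exact isOpen_iUnion fun w => (isOpen_eval d w u).prod (isOpen_eval d v w)

instance tautContinuousInv (d : ℕ) : ContinuousInv (TAut d) := by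
  constructor
  · -- continuity of inversion
    apply continuous_induced_rng.2
    apply @continuous_pi _ _ _ _ (fun _ => (⊥ : TopologicalSpace (Vertex d)))
    intro v
    apply continuous_into_vertex
      (f := fun g : TAut d => ((g⁻¹ : TAut d) : Equiv.Perm (Vertex d)) v)
    intro u
    have h : (fun g : TAut d => ((g⁻¹ : TAut d) : Equiv.Perm (Vertex d)) v) ⁻¹' {u}
        = {g : TAut d | (g : Equiv.Perm (Vertex d)) u = v} := by
      ext g
      simp only [Set.mem_preimage, Set.mem_singleton_iff, Set.mem_setOf_eq,
        InvMemClass.coe_inv]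
      constructor
      · intro hg; rw [← hg, ← Equiv.Perm.mul_apply, mul_inv_cancel, Equiv.Perm.one_apply]
      · intro hg; rw [← hg, ← Equiv.Perm.mul_apply, inv_mul_cancel, Equiv.Perm.one_apply]
    rw [h]
    exact isOpen_eval d u v

instance tautTopologicalGroup (d : ℕ) : IsTopologicalGroup (TAut d) := ⟨⟩

/-- A subgroup of `Aut(T)` (viewed as a topological group with the congruence topology) is
topologically finitely generated if it contains a finitely generated dense subgroup. -/
def TopFG (H : Subgroup (TAut d)) : Prop :=
  ∃ S : Set ↥H, S.Finite ∧ Dense ((Subgroup.closure S : Subgroup ↥H) : Set ↥H)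

/-- A profinite group is just-infinite if it is infinite and every nontrivial closed normal
subgroup has finite index. -/
def JustInfinite (H : Subgroup (TAut d)) : Prop :=
  Infinite ↥H ∧ ∀ N : Subgroup ↥H, N.Normal → IsClosed (N : Set ↥H) → N ≠ ⊥ → N.index ≠ 0

/-- A profinite group is strongly complete if every subgroup of finite index is open. -/
def StronglyComplete (H : Subgroup (TAut d)) : Prop :=
  ∀ N : Subgroup ↥H, N.index ≠ 0 → IsOpen (N : Set ↥H)

end TreeFT

namespace TreeFT

/-- The rigid vertex stabilizer `rist_G(v)`: elements of `G` fixing every vertex not lying in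
the subtree rooted at `v`. -/
def rist {d : ℕ} (G : Subgroup (TAut d)) (v : Vertex d) : Subgroup (TAut d) where
  carrier := {g | g ∈ G ∧ ∀ w : Vertex d, ¬ v <+: w → (g : Equiv.Perm (Vertex d)) w = w}
  one_mem' := ⟨one_mem G, fun _ _ => rfl⟩
  mul_mem' := by
    rintro g h ⟨hg1, hg2⟩ ⟨hh1, hh2⟩
    refine ⟨mul_mem hg1 hh1, fun w hw => ?_⟩
    show (g : Equiv.Perm (Vertex d)) ((h : Equiv.Perm (Vertex d)) w) = w
    rw [hh2 w hw, hg2 w hw]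
  inv_mem' := by
    rintro g ⟨hg1, hg2⟩
    refine ⟨inv_mem hg1, fun w hw => ?_⟩
    show ((g : Equiv.Perm (Vertex d)))⁻¹ w = w
    apply (g : Equiv.Perm (Vertex d)).injective
    rw [← Equiv.Perm.mul_apply, mul_inv_cancel, Equiv.Perm.one_apply, hg2 w hw]

/-- The `n`-th rigid level stabilizer `RiSt_G(n)`: the subgroup generated by the rigid
stabilizers of the vertices of level `n`. -/
def rigidLevelStab {d : ℕ} (G : Subgroup (TAut d)) (n : ℕ) : Subgroup (TAut d) :=
  ⨆ v ∈ {v : Vertex d | v.length = n}, rist G v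

section AUX
variable {d : ℕ}

lemma prefix_apply (g : TAut d) {v u : Vertex d}
    (hv : (g : Equiv.Perm (Vertex d)) v = v) (hvu : v <+: u) :
    v <+: (g : Equiv.Perm (Vertex d)) u := by
  obtain ⟨w, rfl⟩ := hvu
  have h := take_apply g v w
  rw [hv] at h
  exact List.prefix_iff_eq_take.mpr h.symm

lemma inv_fix (g : TAut d) {v : Vertex d} (hv : (g : Equiv.Perm (Vertex d)) v = v) :
    ((g⁻¹ : TAut d) : Equiv.Perm (Vertex d)) v = v := by
  simp only [InvMemClass.coe_inv]
  conv_lhs => rw [← hv]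
  exact Equiv.symm_apply_apply _ _

/-- The restriction of `g` to the subtree rooted at a fixed vertex `v`. -/
def restr (g : TAut d) (v : Vertex d) (hv : (g : Equiv.Perm (Vertex d)) v = v) : TAut d :=
  ⟨{ toFun := fun u => if v <+: u then (g : Equiv.Perm (Vertex d)) u else u
     invFun := fun u => if v <+: u then ((g : Equiv.Perm (Vertex d)))⁻¹ u else u
     left_inv := by
       intro u
       dsimp only
       by_cases h : v <+: u
       · rw [if_pos h, if_pos (prefix_apply g hv h), ← Equiv.Perm.mul_apply, inv_mul_cancel, Equiv.Perm.one_apply]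
       · rw [if_neg h, if_neg h]
     right_inv := by
       intro u
       dsimp only
       by_cases h : v <+: u
       · have h2 := prefix_apply g⁻¹ (inv_fix g hv) h
         simp only [InvMemClass.coe_inv] at h2
         rw [if_pos h, if_pos h2, ← Equiv.Perm.mul_apply, mul_inv_cancel, Equiv.Perm.one_apply]
       · rw [if_neg h, if_neg h] },
   by
    constructor
    · intro u
      by_cases h : v <+: u
      · simp only [Equiv.coe_fn_mk, if_pos h, length_apply]
      · simp only [Equiv.coe_fn_mk, if_neg h]
    · intro u w
      simp only [Equiv.coe_fn_mk]
      by_cases h1 : v <+: u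
      · have h2 : v <+: u ++ w := h1.trans (List.prefix_append u w)
        rw [if_pos h1, if_pos h2]
        exact take_apply g u w
      · by_cases h2 : v <+: u ++ w
        · rw [if_neg h1, if_pos h2]
          have hu : u <+: v :=
            (List.prefix_or_prefix_of_prefix (List.prefix_append u w) h2).resolve_right h1
          obtain ⟨t, ht⟩ := h2
          rw [← ht]
          have t1 : ((g : Equiv.Perm (Vertex d)) (v ++ t)).take v.length = v := by
            rw [take_apply, hv]
          have hle : u.length ≤ v.length := hu.length_le
          calc ((g : Equiv.Perm (Vertex d)) (v ++ t)).take u.length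
              = (((g : Equiv.Perm (Vertex d)) (v ++ t)).take v.length).take u.length := by
                rw [List.take_take, min_eq_left hle]
            _ = v.take u.length := by rw [t1]
            _ = u := (List.prefix_iff_eq_take.mp hu).symm
        · have h3 : ¬ v <+: u := h1
          rw [if_neg h1, if_neg h2]
          exact List.take_left⟩

lemma restr_apply_of_prefix (g : TAut d) (v : Vertex d)
    (hv : (g : Equiv.Perm (Vertex d)) v = v) (u : Vertex d) (h : v <+: u) :
    ((restr g v hv : TAut d) : Equiv.Perm (Vertex d)) u = (g : Equiv.Perm (Vertex d)) u := by
  show (if v <+: u then (g : Equiv.Perm (Vertex d)) u else u) = _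
  rw [if_pos h]

lemma restr_apply_of_not_prefix (g : TAut d) (v : Vertex d)
    (hv : (g : Equiv.Perm (Vertex d)) v = v) (u : Vertex d) (h : ¬ v <+: u) :
    ((restr g v hv : TAut d) : Equiv.Perm (Vertex d)) u = u := by
  show (if v <+: u then (g : Equiv.Perm (Vertex d)) u else u) = u
  rw [if_neg h]

lemma sect_restr (g : TAut d) (v : Vertex d) (hv : (g : Equiv.Perm (Vertex d)) v = v)
    {u : Vertex d} (hvu : v <+: u) : sect (restr g v hv) u = sect g u := by
  apply Subtype.ext; apply Equiv.ext; intro w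
  simp only [sect_apply]
  rw [restr_apply_of_prefix g v hv (u ++ w) (hvu.trans (List.prefix_append u w))]

lemma restr_mem_gft {D n : ℕ} {P : Subgroup (FAut d D)} {g : TAut d}
    (hgG : g ∈ gft d D P) (hglst : g ∈ lst d (n + D - 1)) {v : Vertex d} (hvlen : v.length = n)
    (hv : (g : Equiv.Perm (Vertex d)) v = v) :
    restr g v hv ∈ gft d D P := by
  intro u
  by_cases h1 : v <+: u
  · rw [sect_restr g v hv h1]; exact hgG u
  · have hmem : sect (restr g v hv) u ∈ lst d D := by
      intro w hw
      rw [sect_apply]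
      by_cases h2 : v <+: u ++ w
      · have hu : u <+: v :=
          (List.prefix_or_prefix_of_prefix (List.prefix_append u w) h2).resolve_right h1
        have hne : u ≠ v := by
          intro he; exact h1 (by rw [he])
        have hlt : u.length < v.length :=
          lt_of_le_of_ne hu.length_le (fun hl => hne (hu.eq_of_length hl))
        have hlen2 : (u ++ w).length ≤ n + D - 1 := by
          rw [List.length_append]; omega
        rw [restr_apply_of_prefix g v hv (u ++ w) h2, hglst (u ++ w) hlen2, List.drop_left]
      · rw [restr_apply_of_not_prefix g v hv (u ++ w) h2, List.drop_left]
    have : proj d D (sect (restr g v hv) u) = 1 := (QuotientGroup.eq_one_iff _).mpr hmem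
    rw [this]; exact one_mem P

lemma restr_mem_rist {D n : ℕ} {P : Subgroup (FAut d D)} {g : TAut d}
    (hgG : g ∈ gft d D P) (hglst : g ∈ lst d (n + D - 1)) {v : Vertex d} (hvlen : v.length = n)
    (hv : (g : Equiv.Perm (Vertex d)) v = v) :
    restr g v hv ∈ rist (gft d D P) v :=
  ⟨restr_mem_gft hgG hglst hvlen hv, fun w hw => restr_apply_of_not_prefix g v hv w hw⟩

lemma rist_le_rigidLevelStab (G : Subgroup (TAut d)) {n : ℕ} {v : Vertex d}
    (hv : v.length = n) : rist G v ≤ rigidLevelStab G n :=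
  le_iSup₂ (f := fun (v : Vertex d) (_ : v ∈ {v : Vertex d | v.length = n}) => rist G v) v hv

lemma take_apply_of_mem_lst {m : ℕ} {g : TAut d} (hg : g ∈ lst d m) {n : ℕ} (hnm : n ≤ m)
    (u : Vertex d) (hu : n ≤ u.length) :
    ((g : Equiv.Perm (Vertex d)) u).take n = u.take n := by
  have h := take_apply g (u.take n) (u.drop n)
  rw [List.take_append_drop, List.length_take, min_eq_left hu] at h
  rw [h, hg _ (by rw [List.length_take]; omega)]

/-- The list of all words of length `n`. -/
def allWords (d : ℕ) : ℕ → List (Vertex d)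
  | 0 => [[]]
  | n+1 => (List.finRange d).flatMap fun i => (allWords d n).map (i :: ·)

lemma mem_allWords {n : ℕ} {w : Vertex d} : w ∈ allWords d n ↔ w.length = n := by
  induction n generalizing w with
  | zero => simp [allWords, List.length_eq_zero_iff]
  | succ n ih =>
    simp only [allWords, List.mem_flatMap, List.mem_map, List.mem_finRange, true_and]
    constructor
    · rintro ⟨i, w', hw', rfl⟩
      simp [ih.mp hw']
    · intro hw
      cases w with
      | nil => simp at hw
      | cons i t => exact ⟨i, t, ih.mpr (by simpa using hw), rfl⟩

lemma exists_rigid_eq {D n : ℕ} (P : Subgroup (FAut d D)) {g : TAut d}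
    (hgG : g ∈ gft d D P) (hglst : g ∈ lst d (n + D - 1)) (hnD : n ≤ n + D - 1) :
    ∀ L : List (Vertex d), L.Nodup → (∀ v ∈ L, v.length = n) →
      ∃ h ∈ rigidLevelStab (gft d D P) n,
        ∀ u : Vertex d, ((h : TAut d) : Equiv.Perm (Vertex d)) u =
          if ∃ v ∈ L, v <+: u then (g : Equiv.Perm (Vertex d)) u else u := by
  intro L
  induction L with
  | nil =>
    intro _ _
    exact ⟨1, one_mem _, fun u => by simp⟩
  | cons v L ih =>
    intro hnd hlen
    obtain ⟨hvL, hndL⟩ := List.nodup_cons.mp hnd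
    obtain ⟨h, hhmem, hh⟩ := ih hndL (fun v' hv' => hlen v' (List.mem_cons_of_mem _ hv'))
    have hvlen : v.length = n := hlen v List.mem_cons_self
    have hvfix : (g : Equiv.Perm (Vertex d)) v = v := hglst v (by omega)
    refine ⟨restr g v hvfix * h,
      mul_mem (rist_le_rigidLevelStab _ hvlen (restr_mem_rist hgG hglst hvlen hvfix)) hhmem, ?_⟩
    intro u
    show ((restr g v hvfix : TAut d) : Equiv.Perm (Vertex d))
      (((h : TAut d) : Equiv.Perm (Vertex d)) u) = _
    by_cases h1 : v <+: u
    · have h2 : ¬ ∃ v' ∈ L, v' <+: u := by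
        rintro ⟨v', hv'L, hv'u⟩
        have hv'len : v'.length = n := hlen v' (List.mem_cons_of_mem _ hv'L)
        have : v' = v := by
          have e1 := List.prefix_iff_eq_take.mp h1
          have e2 := List.prefix_iff_eq_take.mp hv'u
          rw [hvlen] at e1
          rw [hv'len] at e2
          exact e2.trans e1.symm
        exact hvL (this ▸ hv'L)
      rw [hh u, if_neg h2, restr_apply_of_prefix g v hvfix u h1,
        if_pos ⟨v, List.mem_cons_self, h1⟩]
    · by_cases h2 : ∃ v' ∈ L, v' <+: u
      · rw [hh u, if_pos h2]
        obtain ⟨v', hv'L, hv'u⟩ := h2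
        have hun : n ≤ u.length := by
          rw [← hlen v' (List.mem_cons_of_mem _ hv'L)]; exact hv'u.length_le
        have hgu : ¬ v <+: (g : Equiv.Perm (Vertex d)) u := by
          intro hc
          apply h1
          have ht := take_apply_of_mem_lst hglst hnD u hun
          have e1 := List.prefix_iff_eq_take.mp hc
          rw [hvlen, ht] at e1
          rw [List.prefix_iff_eq_take, hvlen]
          exact e1
        rw [restr_apply_of_not_prefix g v hvfix _ hgu,
          if_pos ⟨v', List.mem_cons_of_mem _ hv'L, hv'u⟩]
      · have h3 : ¬ ∃ v' ∈ v :: L, v' <+: u := by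
          rintro ⟨v', hv', hp⟩
          rcases List.mem_cons.mp hv' with rfl | hv'
          exacts [h1 hp, h2 ⟨v', hv', hp⟩]
        rw [hh u, if_neg h2, restr_apply_of_not_prefix g v hvfix u h1, if_neg h3]

lemma st_le_rigidLevelStab {D n : ℕ} (hD : 1 ≤ D) (hn : 1 ≤ n) (P : Subgroup (FAut d D)) :
    gft d D P ⊓ lst d (n + D - 1) ≤ rigidLevelStab (gft d D P) n := by
  rintro g ⟨hgG, hglst⟩
  obtain ⟨h, hhmem, hh⟩ := exists_rigid_eq P hgG hglst (by omega) ((allWords d n).dedup)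
    (List.nodup_dedup _) (fun v hv => mem_allWords.mp (List.mem_dedup.mp hv))
  have heq : h = g := by
    apply Subtype.ext; apply Equiv.ext; intro u
    rw [hh u]
    by_cases hu : n ≤ u.length
    · rw [if_pos ⟨u.take n, List.mem_dedup.mpr (mem_allWords.mpr
        (by rw [List.length_take]; omega)), List.take_prefix n u⟩]
    · have hnc : ¬ ∃ v ∈ (allWords d n).dedup, v <+: u := by
        rintro ⟨v, hvL, hvu⟩
        have hl := hvu.length_le
        rw [mem_allWords.mp (List.mem_dedup.mp hvL)] at hl
        omega
      rw [if_neg hnc]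
      exact (hglst u (by omega)).symm
  exact heq ▸ hhmem

end AUX

/-- If `P ≤ Aut(T^D)` is a minimal pattern subgroup with group of finite
type `G = G_P`, then `St_G(n + D − 1) ≤ RiSt_G(n)` for all `n ≥ 1`; in particular, if `G` is
infinite then `RiSt_G(n) ≠ 1` for all `n ≥ 1`, i.e. `G` is weakly branch. -/
theorem statement_15 (d D : ℕ) (hD : 1 ≤ D) (P : Subgroup (FAut d D))
    (hmin : IsMinimalPattern d D P) :
    (∀ n : ℕ, 1 ≤ n →
      gft d D P ⊓ lst d (n + D - 1) ≤ rigidLevelStab (gft d D P) n) ∧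
    (Infinite ↥(gft d D P) → ∀ n : ℕ, 1 ≤ n → rigidLevelStab (gft d D P) n ≠ ⊥) := by
  constructor
  · intro n hn
    exact st_le_rigidLevelStab hD hn P
  · intro hinf n hn hbot
    haveI := hinf
    set m := n + D - 1 with hm
    haveI : Finite {v : Vertex d // v.length ≤ m} :=
      (List.finite_length_le (Fin d) m).to_subtype
    let f : ↥(gft d D P) → ({v : Vertex d // v.length ≤ m} → {v : Vertex d // v.length ≤ m}) :=
      fun g v => ⟨((g : TAut d) : Equiv.Perm (Vertex d)) v, by rw [length_apply]; exact v.2⟩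
    have hinj : Function.Injective f := by
      intro a b hab
      have hpt : ∀ v : Vertex d, v.length ≤ m →
          ((a : TAut d) : Equiv.Perm (Vertex d)) v = ((b : TAut d) : Equiv.Perm (Vertex d)) v :=
        fun v hv => Subtype.ext_iff.mp (congrFun hab ⟨v, hv⟩)
      have hk : ((b : TAut d)⁻¹ * (a : TAut d)) ∈ gft d D P ⊓ lst d m :=
        Subgroup.mem_inf.mpr ⟨mul_mem (inv_mem (SetLike.coe_mem b)) (SetLike.coe_mem a), fun v hv => by
          show ((b : TAut d) : Equiv.Perm (Vertex d))⁻¹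
            (((a : TAut d) : Equiv.Perm (Vertex d)) v) = v
          rw [hpt v hv, ← Equiv.Perm.mul_apply, inv_mul_cancel, Equiv.Perm.one_apply]⟩
      have := st_le_rigidLevelStab hD hn P hk
      rw [hbot, Subgroup.mem_bot, inv_mul_eq_one] at this
      exact Subtype.ext this.symm
    haveI : Finite ↥(gft d D P) := Finite.of_injective f hinj
    exact not_finite ↥(gft d D P)


end TreeFT
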